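/- Let M be a semiumbilical immersed surface in ℝ⁴, let (t₁,t₂) be a local orthonormal frame of TM satisfying α(t₁,t₂) = 0, put b₁ = α(t₁,t₁) and b₂ = α(t₂,t₂), and let c be the normal section satisfying c·α = g. Then ⟨b₁, ∇^⊥_{t₂} c⟩ = 0 and ⟨b₂, ∇^⊥_{t₁} c⟩ = 0. -/

import Mathlib

/- Local framework: an immersed surface in ℝⁿ is given by a smooth parametrization
`ψ : Pl → Amb n` (`Pl = ℝ²` the parameter domain) whose differential is everywhere
injective.  Tangent/normal spaces, fundamental forms, connections, curvature ellipse,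
(semi)umbilic and inflection points, flatness, etc. are defined from `ψ`. -/

noncomputable section
open scoped RealInnerProductSpace

/-- The parameter plane ℝ². -/
abbrev Pl := EuclideanSpace ℝ (Fin 2)
/-- Ambient Euclidean space ℝⁿ. -/
abbrev Amb (n : ℕ) := EuclideanSpace ℝ (Fin n)

/-- `ψ` is a smooth immersion. -/
def Immersion {n : ℕ} (ψ : Pl → Amb n) : Prop :=
  ContDiff ℝ (⊤ : ℕ∞) ψ ∧ ∀ q, Function.Injective (fderiv ℝ ψ q)

/-- Tangent plane `T_pM` (as a linear subspace of the ambient space) at the point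
with parameter `q`. -/
def Tang {n : ℕ} (ψ : Pl → Amb n) (q : Pl) : Submodule ℝ (Amb n) :=
  LinearMap.range (fderiv ℝ ψ q : Pl →ₗ[ℝ] Amb n)

/-- Normal space `N_pM = (T_pM)ᗮ`. -/
def Nor {n : ℕ} (ψ : Pl → Amb n) (q : Pl) : Submodule ℝ (Amb n) :=
  (Tang ψ q)ᗮ

/-- Tangential part `X ↦ X^⊤` of an ambient vector. -/
def tproj {n : ℕ} (ψ : Pl → Amb n) (q : Pl) (x : Amb n) : Amb n :=
  ((Tang ψ q).orthogonalProjectionOnto x : Amb n)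

/-- Normal part `X ↦ X^⊥` of an ambient vector. -/
def nproj {n : ℕ} (ψ : Pl → Amb n) (q : Pl) (x : Amb n) : Amb n :=
  x - tproj ψ q x

/-- The second fundamental form `α` at the point of parameter `q`, evaluated on the
tangent vectors `dψ_q v`, `dψ_q w` (for parameter directions `v w : Pl`):
`α(dψ v, dψ w) = (D_{dψ v} (dψ w))^⊥ = (∂_v ∂_w ψ)^⊥`. -/
def sff {n : ℕ} (ψ : Pl → Amb n) (q : Pl) (v w : Pl) : Amb n :=
  nproj ψ q (fderiv ℝ (fun x => fderiv ℝ ψ x w) q v)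

/-- The curvature ellipse at `q`: image of `η(t) = α(t,t)` over the unit tangent
vectors `t = dψ_q v`. -/
def Ellipse {n : ℕ} (ψ : Pl → Amb n) (q : Pl) : Set (Amb n) :=
  {z | ∃ v : Pl, ‖fderiv ℝ ψ q v‖ = 1 ∧ z = sff ψ q v v}

/-- `q` is an umbilic point: the curvature ellipse degenerates to a point. -/
def Umbilic {n : ℕ} (ψ : Pl → Amb n) (q : Pl) : Prop :=
  ∃ a : Amb n, Ellipse ψ q = {a}

/-- `q` is a semiumbilic point: the curvature ellipse lies in an affine line. -/
def Semiumbilic {n : ℕ} (ψ : Pl → Amb n) (q : Pl) : Prop :=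
  ∃ a b : Amb n, Ellipse ψ q ⊆ {x | ∃ s : ℝ, x = a + s • b}

/-- `q` is a point of inflection: the curvature ellipse lies in a line through the
origin of the normal space. -/
def Inflection {n : ℕ} (ψ : Pl → Amb n) (q : Pl) : Prop :=
  ∃ b : Amb n, Ellipse ψ q ⊆ {x | ∃ s : ℝ, x = s • b}

/-- The surface is semiumbilical: every point is semiumbilic and not of inflection. -/
def Semiumbilical {n : ℕ} (ψ : Pl → Amb n) : Prop :=
  ∀ q, Semiumbilic ψ q ∧ ¬ Inflection ψ q

/-- A smooth ambient-valued field which is everywhere tangent. -/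
def TangentField {n : ℕ} (ψ : Pl → Amb n) (F : Pl → Amb n) : Prop :=
  ContDiff ℝ (⊤ : ℕ∞) F ∧ ∀ q, F q ∈ Tang ψ q

/-- A smooth ambient-valued field which is everywhere normal (a section of `NM`). -/
def NormalField {n : ℕ} (ψ : Pl → Amb n) (F : Pl → Amb n) : Prop :=
  ContDiff ℝ (⊤ : ℕ∞) F ∧ ∀ q, F q ∈ Nor ψ q

/-- The tangent covariant derivative `∇^⊤ F = (D F)^⊤` of an ambient field `F`
along the `i`-th coordinate direction of the parameter plane. -/
def covT {n : ℕ} (ψ : Pl → Amb n) (F : Pl → Amb n) (i : Fin 2) (q : Pl) : Amb n :=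
  tproj ψ q (fderiv ℝ F q (EuclideanSpace.single i (1:ℝ)))

/-- The tangent connection `∇^⊤` is flat: its curvature `R(∂₁,∂₂)` annihilates every
smooth tangent field (by tensoriality of the curvature this means `R = 0`, since the
coordinate fields `∂₁, ∂₂` commute and span). -/
def FlatSurface {n : ℕ} (ψ : Pl → Amb n) : Prop :=
  ∀ F : Pl → Amb n, TangentField ψ F →
    ∀ q, covT ψ (covT ψ F 1) 0 q = covT ψ (covT ψ F 0) 1 q

/-- A tangent field is parallel: `∇^⊤ Y = (D Y)^⊤ = 0` in every tangent direction. -/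
def ParallelT {n : ℕ} (ψ : Pl → Amb n) (F : Pl → Amb n) : Prop :=
  ∀ q (v : Pl), tproj ψ q (fderiv ℝ F q v) = 0

/-- A normal section is parallel: `∇^⊥ u = (D u)^⊥ = 0` in every tangent direction. -/
def ParallelN {n : ℕ} (ψ : Pl → Amb n) (F : Pl → Amb n) : Prop :=
  ∀ q (v : Pl), nproj ψ q (fderiv ℝ F q v) = 0

/-- `c · α = g`: the normal section `c` satisfies `⟨c, α(X,Y)⟩ = ⟨X,Y⟩` for all
tangent vectors `X = dψ v`, `Y = dψ w`. -/
def CAG {n : ℕ} (ψ : Pl → Amb n) (c : Pl → Amb n) : Prop :=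
  ∀ q (v w : Pl), (⟪c q, sff ψ q v w⟫) = ⟪fderiv ℝ ψ q v, fderiv ℝ ψ q w⟫

/-- `e` is a tangent field with `∇^⊤_X e = X` for every tangent vector `X = dψ v`. -/
def EulerField {n : ℕ} (ψ : Pl → Amb n) (e : Pl → Amb n) : Prop :=
  TangentField ψ e ∧ ∀ q (v : Pl), tproj ψ q (fderiv ℝ e q v) = fderiv ℝ ψ q v

/-- `j` is the tangent field `½ grad⟨c,c⟩` (gradient with respect to the first
fundamental form): `⟨2 j, dψ v⟩ = d⟨c,c⟩(dψ v)` for every direction `v`. -/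
def HalfGradCSq {n : ℕ} (ψ : Pl → Amb n) (c j : Pl → Amb n) : Prop :=
  TangentField ψ j ∧
    ∀ q (v : Pl), 2 * (⟪j q, fderiv ℝ ψ q v⟫) = fderiv ℝ (fun x => (⟪c x, c x⟫ : ℝ)) q v

/-- `k` is a normal section with `(D_X (e - k))^⊥ = 0` for all tangent `X`. -/
def KField {n : ℕ} (ψ : Pl → Amb n) (e k : Pl → Amb n) : Prop :=
  NormalField ψ k ∧ ∀ q (v : Pl), nproj ψ q (fderiv ℝ (fun x => e x - k x) q v) = 0

/-- `dψ_q v` is a (unit) asymptotic direction at `q`: `η(t) = α(t,t)` is an endpoint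
(extreme point) of the segment into which the curvature ellipse degenerates. -/
def IsAsymptotic {n : ℕ} (ψ : Pl → Amb n) (q : Pl) (v : Pl) : Prop :=
  ‖fderiv ℝ ψ q v‖ = 1 ∧ sff ψ q v v ∈ Set.extremePoints ℝ (Ellipse ψ q)


/-! ### Auxiliary lemmas for Statement 3 -/

section Aux
variable {n : ℕ}

private lemma cast_top_add_one' : ((⊤:ℕ∞) : WithTop ℕ∞) + 1 ≤ ((⊤:ℕ∞) : WithTop ℕ∞) := by
  exact_mod_cast (le_top : (⊤:ℕ∞) + 1 ≤ ⊤)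

private lemma cast_one_le' : (1 : WithTop ℕ∞) ≤ ((⊤:ℕ∞) : WithTop ℕ∞) := by
  exact_mod_cast (le_top : (1:ℕ∞) ≤ ⊤)

private lemma fderiv_apply_smooth {F : Pl → Amb n} (hF : ContDiff ℝ (⊤ : ℕ∞) F) (w : Pl) :
    Differentiable ℝ (fun x => fderiv ℝ F x w) :=
  ((hF.fderiv_right cast_top_add_one').clm_apply contDiff_const).differentiable (by simp)

private lemma fderiv_fderiv_apply' {F : Pl → Amb n} (hF : ContDiff ℝ (⊤ : ℕ∞) F) (q u w : Pl) :
    fderiv ℝ (fun x => fderiv ℝ F x w) q u = fderiv ℝ (fderiv ℝ F) q u w := by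
  have hd2 : DifferentiableAt ℝ (fderiv ℝ F) q :=
    ((hF.fderiv_right cast_top_add_one').differentiable (by simp)) q
  rw [fderiv_clm_apply hd2 (differentiableAt_const w)]
  simp

private lemma snd_symm {F : Pl → Amb n} (hF : ContDiff ℝ (⊤ : ℕ∞) F) (q u v : Pl) :
    fderiv ℝ (fun x => fderiv ℝ F x v) q u = fderiv ℝ (fun x => fderiv ℝ F x u) q v := by
  rw [fderiv_fderiv_apply' hF, fderiv_fderiv_apply' hF]
  exact second_derivative_symmetric (fun y => ((hF.differentiable (by simp)) y).hasFDerivAt)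
    (((hF.fderiv_right cast_top_add_one').differentiable (by simp)) q).hasFDerivAt u v

private lemma tproj_mem (ψ : Pl → Amb n) (q : Pl) (x : Amb n) : tproj ψ q x ∈ Tang ψ q :=
  ((Tang ψ q).orthogonalProjectionOnto x).2

private lemma nproj_mem (ψ : Pl → Amb n) (q : Pl) (x : Amb n) : nproj ψ q x ∈ Nor ψ q :=
  Submodule.sub_starProjection_mem_orthogonal (K := Tang ψ q) x

private lemma inner_tang_nor {ψ : Pl → Amb n} {q : Pl} {t u : Amb n}
    (ht : t ∈ Tang ψ q) (hu : u ∈ Nor ψ q) : (⟪t, u⟫ : ℝ) = 0 :=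
  (Submodule.mem_orthogonal _ u).1 hu t ht

private lemma inner_nor_tang {ψ : Pl → Amb n} {q : Pl} {t u : Amb n}
    (hu : u ∈ Nor ψ q) (ht : t ∈ Tang ψ q) : (⟪u, t⟫ : ℝ) = 0 := by
  rw [real_inner_comm]; exact inner_tang_nor ht hu

private lemma dpsi_mem (ψ : Pl → Amb n) (q w : Pl) : fderiv ℝ ψ q w ∈ Tang ψ q :=
  (LinearMap.mem_range (f := (fderiv ℝ ψ q : Pl →ₗ[ℝ] Amb n))).2 ⟨w, rfl⟩

/-- (∗): `⟪∂_v c, ∂_w ψ⟫ = -⟪∂_v ψ, ∂_w ψ⟫` for a normal field `c` with `c·α = g`. -/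
private lemma star {ψ c : Pl → Amb n} (hψ : ContDiff ℝ (⊤ : ℕ∞) ψ)
    (hc : NormalField ψ c) (hcg : CAG ψ c) (q v w : Pl) :
    (⟪fderiv ℝ c q v, fderiv ℝ ψ q w⟫ : ℝ) = -⟪fderiv ℝ ψ q v, fderiv ℝ ψ q w⟫ := by
  have hdc : DifferentiableAt ℝ c q := (hc.1.differentiable (by simp)) q
  have hdw : DifferentiableAt ℝ (fun x => fderiv ℝ ψ x w) q := fderiv_apply_smooth hψ w q
  have h0 : (fun x => (⟪c x, fderiv ℝ ψ x w⟫ : ℝ)) = fun _ => (0:ℝ) := by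
    funext x; exact inner_nor_tang (hc.2 x) (dpsi_mem ψ x w)
  have h1 : fderiv ℝ (fun x => (⟪c x, fderiv ℝ ψ x w⟫ : ℝ)) q v = 0 := by
    rw [h0]; simp
  rw [fderiv_inner_apply ℝ hdc hdw v] at h1
  set Ψ := fderiv ℝ (fun x => fderiv ℝ ψ x w) q v with hΨ
  have h2 : (⟪c q, Ψ⟫ : ℝ) = ⟪fderiv ℝ ψ q v, fderiv ℝ ψ q w⟫ := by
    have hdecomp : Ψ = tproj ψ q Ψ + nproj ψ q Ψ := by simp [nproj]
    rw [hdecomp, inner_add_right, inner_nor_tang (hc.2 q) (tproj_mem ψ q Ψ)]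
    have hs : nproj ψ q Ψ = sff ψ q v w := rfl
    rw [hs, hcg q v w]; ring
  rw [h2] at h1; linarith

/-- (∗) for an arbitrary tangent vector. -/
private lemma starT {ψ c : Pl → Amb n} (hψ : ContDiff ℝ (⊤ : ℕ∞) ψ)
    (hc : NormalField ψ c) (hcg : CAG ψ c) (q v : Pl) {t : Amb n} (ht : t ∈ Tang ψ q) :
    (⟪fderiv ℝ c q v, t⟫ : ℝ) = -⟪fderiv ℝ ψ q v, t⟫ := by
  obtain ⟨w, rfl⟩ := (LinearMap.mem_range (f := (fderiv ℝ ψ q : Pl →ₗ[ℝ] Amb n))).1 ht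
  exact star hψ hc hcg q v w

/-- `⟪∇^⊥_v c, α(u,w)⟫ = ⟪∂_v c, Ψ_{uw}⟫ + ⟪∂_v ψ, Ψ_{uw}⟫`. -/
private lemma S_eq_A {ψ c : Pl → Amb n} (hψ : ContDiff ℝ (⊤ : ℕ∞) ψ)
    (hc : NormalField ψ c) (hcg : CAG ψ c) (q u v w : Pl) :
    (⟪nproj ψ q (fderiv ℝ c q v), sff ψ q u w⟫ : ℝ)
      = ⟪fderiv ℝ c q v, fderiv ℝ (fun x => fderiv ℝ ψ x w) q u⟫
        + ⟪fderiv ℝ ψ q v, fderiv ℝ (fun x => fderiv ℝ ψ x w) q u⟫ := by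
  set Ψ := fderiv ℝ (fun x => fderiv ℝ ψ x w) q u with hΨ
  set D := fderiv ℝ c q v with hD
  have h1 : (⟪nproj ψ q D, sff ψ q u w⟫ : ℝ) = ⟪D, sff ψ q u w⟫ := by
    have : D = tproj ψ q D + nproj ψ q D := by simp [nproj]
    have hsff : sff ψ q u w ∈ Nor ψ q := nproj_mem ψ q _
    conv_rhs => rw [this]
    rw [inner_add_left, inner_tang_nor (tproj_mem ψ q D) hsff]
    ring
  have h2 : (⟪D, sff ψ q u w⟫ : ℝ) = ⟪D, Ψ⟫ - ⟪D, tproj ψ q Ψ⟫ := by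
    have : sff ψ q u w = Ψ - tproj ψ q Ψ := rfl
    rw [this, inner_sub_right]
  have h3 : (⟪D, tproj ψ q Ψ⟫ : ℝ) = -⟪fderiv ℝ ψ q v, tproj ψ q Ψ⟫ :=
    starT hψ hc hcg q v (tproj_mem ψ q Ψ)
  have h4 : (⟪fderiv ℝ ψ q v, tproj ψ q Ψ⟫ : ℝ) = ⟪fderiv ℝ ψ q v, Ψ⟫ := by
    have : Ψ = tproj ψ q Ψ + nproj ψ q Ψ := by simp [nproj]
    conv_rhs => rw [this]
    rw [inner_add_right, inner_tang_nor (dpsi_mem ψ q v) (nproj_mem ψ q Ψ)]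
    ring
  rw [h1, h2, h3, h4]; ring

/-- The quantity `⟪∂_v c, Ψ_{uw}⟫ + ⟪∂_v ψ, Ψ_{uw}⟫` is symmetric in `u, v`. -/
private lemma A_symm {ψ c : Pl → Amb n} (hψ : ContDiff ℝ (⊤ : ℕ∞) ψ)
    (hc : NormalField ψ c) (hcg : CAG ψ c) (q u v w : Pl) :
    (⟪fderiv ℝ c q v, fderiv ℝ (fun x => fderiv ℝ ψ x w) q u⟫ : ℝ)
        + ⟪fderiv ℝ ψ q v, fderiv ℝ (fun x => fderiv ℝ ψ x w) q u⟫
      = ⟪fderiv ℝ c q u, fderiv ℝ (fun x => fderiv ℝ ψ x w) q v⟫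
        + ⟪fderiv ℝ ψ q u, fderiv ℝ (fun x => fderiv ℝ ψ x w) q v⟫ := by
  have key : ∀ a b : Pl,
      (⟪fderiv ℝ c q b, fderiv ℝ (fun x => fderiv ℝ ψ x w) q a⟫ : ℝ)
        + ⟪fderiv ℝ ψ q b, fderiv ℝ (fun x => fderiv ℝ ψ x w) q a⟫
      = -⟪fderiv ℝ (fun x => fderiv ℝ c x b) q a, fderiv ℝ ψ q w⟫
        - ⟪fderiv ℝ (fun x => fderiv ℝ ψ x b) q a, fderiv ℝ ψ q w⟫ := by
    intro a b
    have hdc : DifferentiableAt ℝ (fun x => fderiv ℝ c x b) q :=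
      fderiv_apply_smooth hc.1 b q
    have hdψb : DifferentiableAt ℝ (fun x => fderiv ℝ ψ x b) q :=
      fderiv_apply_smooth hψ b q
    have hdψw : DifferentiableAt ℝ (fun x => fderiv ℝ ψ x w) q :=
      fderiv_apply_smooth hψ w q
    have h0 : (fun x => (⟪fderiv ℝ c x b, fderiv ℝ ψ x w⟫ : ℝ)
        + ⟪fderiv ℝ ψ x b, fderiv ℝ ψ x w⟫) = fun _ => (0:ℝ) := by
      funext x
      rw [star hψ hc hcg x b w]; ring
    have h1 : fderiv ℝ (fun x => (⟪fderiv ℝ c x b, fderiv ℝ ψ x w⟫ : ℝ)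
        + ⟪fderiv ℝ ψ x b, fderiv ℝ ψ x w⟫) q a = 0 := by
      rw [h0]; simp
    rw [fderiv_fun_add (by exact (hdc.inner ℝ hdψw)) (by exact (hdψb.inner ℝ hdψw))] at h1
    simp only [ContinuousLinearMap.add_apply] at h1
    rw [fderiv_inner_apply ℝ hdc hdψw a, fderiv_inner_apply ℝ hdψb hdψw a] at h1
    linarith [h1]
  rw [key u v, key v u, snd_symm hψ q u v, snd_symm hc.1 q u v]

/-- `sff` is symmetric. -/
private lemma sff_symm (ψ : Pl → Amb n) (hψ : ContDiff ℝ (⊤ : ℕ∞) ψ) (q v w : Pl) :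
    sff ψ q v w = sff ψ q w v := by
  unfold sff
  rw [snd_symm hψ q v w]

/-- Main symmetry: `⟪∇^⊥_v c, α(u,w)⟫ = ⟪∇^⊥_u c, α(v,w)⟫`. -/
private lemma S_symm {ψ c : Pl → Amb n} (hψ : ContDiff ℝ (⊤ : ℕ∞) ψ)
    (hc : NormalField ψ c) (hcg : CAG ψ c) (q u v w : Pl) :
    (⟪nproj ψ q (fderiv ℝ c q v), sff ψ q u w⟫ : ℝ)
      = ⟪nproj ψ q (fderiv ℝ c q u), sff ψ q v w⟫ := by
  rw [S_eq_A hψ hc hcg q u v w, S_eq_A hψ hc hcg q v u w]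
  exact A_symm hψ hc hcg q u v w

end Aux


/-- On a semiumbilical surface in ℝ⁴ with an orthonormal frame `(t₁,t₂)`
with `α(t₁,t₂) = 0`, `b₁ = α(t₁,t₁)`, `b₂ = α(t₂,t₂)`, and `c` the normal section with
`c·α = g`, one has `⟨b₁, ∇^⊥_{t₂} c⟩ = 0` and `⟨b₂, ∇^⊥_{t₁} c⟩ = 0`. -/
theorem statement_3 (ψ : Pl → Amb 4) (hψ : Immersion ψ) (hsem : Semiumbilical ψ)
    (T₁ T₂ : Pl → Pl)
    (hT₁s : ContDiff ℝ (⊤ : ℕ∞) T₁) (hT₂s : ContDiff ℝ (⊤ : ℕ∞) T₂)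
    (hT₁ : ∀ q, ‖fderiv ℝ ψ q (T₁ q)‖ = 1) (hT₂ : ∀ q, ‖fderiv ℝ ψ q (T₂ q)‖ = 1)
    (hT₁₂ : ∀ q, ⟪fderiv ℝ ψ q (T₁ q), fderiv ℝ ψ q (T₂ q)⟫ = 0)
    (hb₃ : ∀ q, sff ψ q (T₁ q) (T₂ q) = 0)
    (c : Pl → Amb 4) (hc : NormalField ψ c) (hcg : CAG ψ c) :
    ∀ q, (⟪sff ψ q (T₁ q) (T₁ q), nproj ψ q (fderiv ℝ c q (T₂ q))⟫ : ℝ) = 0 ∧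
         (⟪sff ψ q (T₂ q) (T₂ q), nproj ψ q (fderiv ℝ c q (T₁ q))⟫ : ℝ) = 0 := by
  intro q
  constructor
  · rw [real_inner_comm, S_symm hψ.1 hc hcg q (T₁ q) (T₂ q) (T₁ q),
      sff_symm ψ hψ.1 q (T₂ q) (T₁ q), hb₃ q, inner_zero_right]
  · rw [real_inner_comm, S_symm hψ.1 hc hcg q (T₂ q) (T₁ q) (T₂ q), hb₃ q, inner_zero_right]
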